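/- Under the MDP regularity assumptions, for every bounded measurable u : X × A → ℝ and every a ∈ A, the function x ↦ (Fu)(x,a) is Lipschitz on X with Lipschitz constant M_r + γ ‖u‖_∞ M_p; i.e., |(Fu)(x,a) − (Fu)(x',a)| ≤ (M_r + γ‖u‖_∞ M_p)‖x−x'‖ for all x, x' ∈ X. -/
import Mathlib


open MeasureTheory

/-- Lipschitz continuity of the Bellman update: for bounded measurable `u`,
`x ↦ (Fu)(x,a)` is Lipschitz with constant `M_r + γ ‖u‖_∞ M_p`. -/
theorem bellman_operator_lipschitz
    (d : ℕ) (X : Set (EuclideanSpace ℝ (Fin d)))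
    (hXne : X.Nonempty) (hXcomp : IsCompact X)
    (A : Type*) [Fintype A] [Nonempty A]
    (γ Mr Mp : ℝ) (hγ : γ ∈ Set.Ioo (0:ℝ) 1)
    (r : EuclideanSpace ℝ (Fin d) → A → ℝ)
    (hr_meas : ∀ a, Measurable fun x => r x a)
    (hr_lip : ∀ a : A, ∀ x ∈ X, ∀ x' ∈ X, |r x a - r x' a| ≤ Mr * ‖x - x'‖)
    (p : EuclideanSpace ℝ (Fin d) → EuclideanSpace ℝ (Fin d) → A → ℝ)
    (hp_meas : ∀ x ∈ X, ∀ a : A, Measurable fun y => p y x a)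
    (hp_nonneg : ∀ y ∈ X, ∀ x ∈ X, ∀ a : A, 0 ≤ p y x a)
    (hp_int : ∀ x ∈ X, ∀ a : A, ∫ y in X, p y x a = 1)
    (W : EuclideanSpace ℝ (Fin d) → ℝ)
    (hW_meas : Measurable W) (hW_nonneg : ∀ y ∈ X, 0 ≤ W y)
    (hW_integrable : IntegrableOn W X)
    (hp_lip : ∀ a : A, ∀ x ∈ X, ∀ x' ∈ X, ∀ y ∈ X,
      |p y x a - p y x' a| ≤ W y * ‖x - x'‖)
    (hW_int : ∫ y in X, W y ≤ Mp)
    (u : EuclideanSpace ℝ (Fin d) → A → ℝ)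
    (hu_meas : ∀ a, Measurable fun x => u x a)
    (U : ℝ) (hu_bdd : ∀ x ∈ X, ∀ a : A, |u x a| ≤ U) :
    ∀ a : A, ∀ x ∈ X, ∀ x' ∈ X,
      |(r x a + γ * ∫ y in X, p y x a * ⨆ b : A, u y b) -
        (r x' a + γ * ∫ y in X, p y x' a * ⨆ b : A, u y b)|
      ≤ (Mr + γ * U * Mp) * ‖x - x'‖ := by
  intro a x hx x' hx'
  set g : EuclideanSpace ℝ (Fin d) → ℝ := fun y => ⨆ b : A, u y b with hg
  have hXmeas : MeasurableSet X := hXcomp.measurableSet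
  have hγ0 : (0:ℝ) ≤ γ := le_of_lt hγ.1
  have hU0 : 0 ≤ U := by
    obtain ⟨x₀, hx₀⟩ := hXne
    exact le_trans (abs_nonneg _) (hu_bdd x₀ hx₀ (Classical.arbitrary A))
  have hgmeas : Measurable g := Measurable.iSup fun b => hu_meas b
  have hgbdd : ∀ y ∈ X, |g y| ≤ U := by
    intro y hy
    rw [abs_le]
    refine ⟨?_, ciSup_le fun b => (abs_le.mp (hu_bdd y hy b)).2⟩
    refine le_trans ?_ (le_ciSup (f := fun b => u y b)
      (Set.Finite.bddAbove (Set.finite_range _)) (Classical.arbitrary A))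
    linarith [(abs_le.mp (hu_bdd y hy (Classical.arbitrary A))).1]
  -- integrability of p(·|x,a)
  have hpint : ∀ z ∈ X, IntegrableOn (fun y => p y z a) X := by
    intro z hz
    by_contra h
    have := integral_undef (μ := volume.restrict X) (f := fun y => p y z a)
      (by simpa [IntegrableOn] using h)
    rw [hp_int z hz a] at this
    norm_num at this
  have hgint : ∀ z ∈ X, IntegrableOn (fun y => p y z a * g y) X := by
    intro z hz
    refine Integrable.mono' ((hpint z hz).const_mul U)
      (((hp_meas z hz a).mul hgmeas).aestronglyMeasurable) ?_
    filter_upwards [ae_restrict_mem hXmeas] with y hy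
    rw [Real.norm_eq_abs, abs_mul, abs_of_nonneg (hp_nonneg y hy z hz a), mul_comm U]
    exact mul_le_mul_of_nonneg_left (hgbdd y hy) (hp_nonneg y hy z hz a)
  -- difference of integrals
  have hdiff : (∫ y in X, p y x a * g y) - (∫ y in X, p y x' a * g y)
      = ∫ y in X, (p y x a - p y x' a) * g y := by
    rw [← integral_sub (hgint x hx) (hgint x' hx')]
    congr 1; ext y; ring
  have hbound : |∫ y in X, (p y x a - p y x' a) * g y| ≤ Mp * (U * ‖x - x'‖) := by
    have habs : |∫ y in X, (p y x a - p y x' a) * g y|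
        ≤ ∫ y in X, |p y x a - p y x' a| * |g y| := by
      simpa [Real.norm_eq_abs, abs_mul] using
        norm_integral_le_integral_norm (μ := volume.restrict X)
          (f := fun y => (p y x a - p y x' a) * g y)
    have hmono : (∫ y in X, |p y x a - p y x' a| * |g y|)
        ≤ ∫ y in X, W y * (‖x - x'‖ * U) := by
      refine setIntegral_mono_on ?_ ?_ hXmeas ?_
      · refine ((hgint x hx).sub (hgint x' hx')).abs.congr
          (Filter.Eventually.of_forall fun y => ?_)
        show |p y x a * g y - p y x' a * g y| = |p y x a - p y x' a| * |g y|
        rw [← sub_mul, abs_mul]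
      · exact hW_integrable.mul_const _
      · intro y hy
        have := mul_le_mul (hp_lip a x hx x' hx' y hy) (hgbdd y hy)
          (abs_nonneg _) (mul_nonneg (hW_nonneg y hy) (norm_nonneg _))
        linarith [this]
    have heq : (∫ y in X, W y * (‖x - x'‖ * U)) = (∫ y in X, W y) * (‖x - x'‖ * U) :=
      integral_mul_const _ _
    have hlast : (∫ y in X, W y) * (‖x - x'‖ * U) ≤ Mp * (U * ‖x - x'‖) := by
      rw [mul_comm ‖x - x'‖ U]
      exact mul_le_mul_of_nonneg_right hW_int (by positivity)
    linarith
  have final : |(r x a + γ * ∫ y in X, p y x a * g y) -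
      (r x' a + γ * ∫ y in X, p y x' a * g y)| ≤ (Mr + γ * U * Mp) * ‖x - x'‖ := by
    have e1 : (r x a + γ * ∫ y in X, p y x a * g y) -
        (r x' a + γ * ∫ y in X, p y x' a * g y)
        = (r x a - r x' a) +
          γ * ((∫ y in X, p y x a * g y) - (∫ y in X, p y x' a * g y)) := by ring
    rw [e1]
    refine le_trans (abs_add_le _ _) ?_
    rw [abs_mul, abs_of_nonneg hγ0, hdiff]
    refine le_trans (add_le_add (hr_lip a x hx x' hx')
      (mul_le_mul_of_nonneg_left hbound hγ0)) (le_of_eq (by ring))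
  exact final
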